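/- Let x and y be sequences of length m over a linearly ordered alphabet Σ. Then x ≈ y if and only if x and y have the same rank function (ρ_x = ρ_y) and, for all 0 ≤ i < m−1, x[r(i)] = x[r(i+1)] if and only if y[r(i)] = y[r(i+1)], where r = ρ_x⁻¹ (equivalently, x and y have the same equality function). -/
import Mathlib


variable {α : Type*} [LinearOrder α]

/-- β_x(i,j) = 1 if x[i] ≥ x[j], 0 otherwise. -/
def beta {m : ℕ} (x : Fin m → α) (i j : Fin m) : ℕ :=
  if x j ≤ x i then 1 else 0

/-- The rank function ρ_x. -/
def rankFn {m : ℕ} (x : Fin m → α) (i : Fin m) : ℕ :=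
  (Finset.univ.filter fun j => x j < x i ∨ (x j = x i ∧ j < i)).card

/-- Order isomorphism of two sequences of the same length. -/
def OrderIsom {m : ℕ} (x y : Fin m → α) : Prop :=
  ∀ i j : Fin m, x i ≤ x j ↔ y i ≤ y j

/-- The q-neighborhood-ranking value χ^q_x[i]. -/
def chi {m : ℕ} (x : Fin m → α) (q i : ℕ) (h : i + q < m) : ℕ :=
  ∑ j : Fin q, beta x ⟨i, by omega⟩ ⟨i + (j.val + 1), by have := j.isLt; omega⟩ *
    2 ^ (q - (j.val + 1))

/-- The q-neighborhood-ordering value φ^q_x[i]. -/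
def phi {m : ℕ} (x : Fin m → α) (q i : ℕ) (h : i + q < m) : ℕ :=
  ∑ k : Fin q, chi x (k.val + 1) (i + q - (k.val + 1)) (by have := k.isLt; omega) *
    2 ^ ((k.val + 1) * k.val / 2)


lemma rankFn_lt_of_lt {m : ℕ} (x : Fin m → α) {a b : Fin m} (h : x a < x b) :
    rankFn x a < rankFn x b := by
  apply Finset.card_lt_card
  have hsub : (Finset.univ.filter fun j => x j < x a ∨ (x j = x a ∧ j < a)) ⊆
      (Finset.univ.filter fun j => x j < x b ∨ (x j = x b ∧ j < b)) := by
    intro j hj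
    simp only [Finset.mem_filter, Finset.mem_univ, true_and] at *
    rcases hj with h1 | ⟨h1, _⟩
    · exact Or.inl (h1.trans h)
    · exact Or.inl (h1 ▸ h)
  rw [Finset.ssubset_iff_of_subset hsub]
  exact ⟨a, by simp [h], by simp⟩

lemma le_of_rankFn_le {m : ℕ} (x : Fin m → α) {a b : Fin m} (h : rankFn x a ≤ rankFn x b) :
    x a ≤ x b := by
  by_contra hc
  push_neg at hc
  exact absurd (rankFn_lt_of_lt x hc) (by omega)

/-- `x ≈ y` iff `x` and `y` share the same rank function and the same equality function
(consecutive equalities along the inverse rank permutation `r` of `x` agree). -/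
theorem orderIsom_iff_rankFn_eq_and_eqFn_eq {m : ℕ} (x y : Fin m → α)
    (r : Fin m → Fin m) (hr : ∀ i : Fin m, rankFn x (r i) = i.val) :
    OrderIsom x y ↔
      (rankFn x = rankFn y ∧
       ∀ i : ℕ, ∀ h : i + 1 < m,
          (x (r ⟨i, by omega⟩) = x (r ⟨i + 1, h⟩) ↔
           y (r ⟨i, by omega⟩) = y (r ⟨i + 1, h⟩))) := by
  constructor
  · intro hiso
    have heq : ∀ i j : Fin m, x i = x j ↔ y i = y j := by
      intro i j
      constructor
      · intro h
        exact le_antisymm ((hiso i j).mp h.le) ((hiso j i).mp h.ge)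
      · intro h
        exact le_antisymm ((hiso i j).mpr h.le) ((hiso j i).mpr h.ge)
    refine ⟨?_, fun i h => heq _ _⟩
    funext i
    unfold rankFn
    congr 1
    apply Finset.filter_congr
    intro j _
    have hlt : x j < x i ↔ y j < y i := by
      rw [lt_iff_le_not_ge, lt_iff_le_not_ge, hiso j i, hiso i j]
    rw [hlt, heq j i]
  · rintro ⟨hrank, hcons⟩
    have hry : ∀ i : Fin m, rankFn y (r i) = i.val := by
      intro i; rw [← hrank]; exact hr i
    have hmx : ∀ i j : Fin m, i ≤ j → x (r i) ≤ x (r j) := by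
      intro i j hij
      exact le_of_rankFn_le x (by rw [hr, hr]; exact hij)
    have hmy : ∀ i j : Fin m, i ≤ j → y (r i) ≤ y (r j) := by
      intro i j hij
      exact le_of_rankFn_le y (by rw [hry, hry]; exact hij)
    have hrinj : Function.Injective r := by
      intro i j h
      exact Fin.ext (by rw [← hr i, ← hr j, h])
    have hrsurj : Function.Surjective r := Finite.surjective_of_injective hrinj
    have key : ∀ d : ℕ, ∀ i : Fin m, ∀ h : i.val + d < m,
        (x (r i) = x (r ⟨i.val + d, h⟩) ↔ y (r i) = y (r ⟨i.val + d, h⟩)) := by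
      intro d
      induction d with
      | zero => intro i h; simp
      | succ d ih =>
        intro i h
        have h1 : i.val + d < m := by omega
        have le1 : i ≤ (⟨i.val + d, h1⟩ : Fin m) := by
          simp only [Fin.le_def]; omega
        have le2 : (⟨i.val + d, h1⟩ : Fin m) ≤ ⟨i.val + (d + 1), h⟩ := by
          simp only [Fin.le_def]; omega
        have hfe : (⟨i.val + (d + 1), h⟩ : Fin m) = ⟨i.val + d + 1, by omega⟩ :=
          Fin.ext rfl
        have sx : (x (r i) = x (r ⟨i.val + (d + 1), h⟩)) ↔
            ((x (r i) = x (r ⟨i.val + d, h1⟩)) ∧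
             (x (r ⟨i.val + d, h1⟩) = x (r ⟨i.val + d + 1, by omega⟩))) := by
          constructor
          · intro he
            have l1 := hmx _ _ le1
            have l2 := hmx _ _ le2
            have e1 : x (r i) = x (r ⟨i.val + d, h1⟩) :=
              le_antisymm l1 (by rw [he]; exact l2)
            exact ⟨e1, by rw [← e1, he, hfe]⟩
          · rintro ⟨a, b⟩; exact a.trans b
        have sy : (y (r i) = y (r ⟨i.val + (d + 1), h⟩)) ↔
            ((y (r i) = y (r ⟨i.val + d, h1⟩)) ∧
             (y (r ⟨i.val + d, h1⟩) = y (r ⟨i.val + d + 1, by omega⟩))) := by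
          constructor
          · intro he
            have l1 := hmy _ _ le1
            have l2 := hmy _ _ le2
            have e1 : y (r i) = y (r ⟨i.val + d, h1⟩) :=
              le_antisymm l1 (by rw [he]; exact l2)
            exact ⟨e1, by rw [← e1, he, hfe]⟩
          · rintro ⟨a, b⟩; exact a.trans b
        rw [sx, sy, ih i h1, hcons (i.val + d) (by omega)]
    intro a b
    obtain ⟨i, rfl⟩ := hrsurj a
    obtain ⟨j, rfl⟩ := hrsurj b
    rcases le_or_gt i j with hij | hij
    · exact iff_of_true (hmx i j hij) (hmy i j hij)
    · have hd : j.val + (i.val - j.val) < m := by have := i.isLt; omega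
      have hji : (⟨j.val + (i.val - j.val), hd⟩ : Fin m) = i := by
        apply Fin.ext; simp; omega
      have kx := key (i.val - j.val) j hd
      rw [hji] at kx
      constructor
      · intro h'
        have : x (r j) = x (r i) := le_antisymm (hmx j i hij.le) h'
        exact (kx.mp this) ▸ le_refl _
      · intro h'
        have : y (r j) = y (r i) := le_antisymm (hmy j i hij.le) h'
        exact (kx.mpr this) ▸ le_refl _
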